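/- (Theorem 1, Item 4) Suppose there exist a continuously differentiable V : J × ℝⁿ → [0,∞), constants m > 0 and k₁, k₂ > 0, and a piecewise continuous μ : J → ℝ such that k₁|x|^m ≤ V(t,x) ≤ k₂|x|^m and ∂V/∂t(t,x) + ∇ₓV(t,x)·f(t,x) ≤ μ(t)V(t,x) for all (t,x) ∈ J × ℝⁿ. If μ is uniformly exponentially stable with constants α > 0 and β ≥ 0 (i.e., ∫_{t₀}^{t} μ(s) ds ≤ −α(t−t₀) + β for all t ≥ t₀ ∈ J), then every solution of ẋ = f(t,x) satisfies |x(t)| ≤ (k₂/k₁)^{1/m}·exp(β/m)·|x(t₀)|·exp(−(α/m)(t−t₀)) for all t ≥ t₀ ∈ J; in particular the system is globally uniformly exponentially stable. -/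

import Mathlib

open Filter MeasureTheory Set
open intervalIntegral Topology


lemma gron_pos (g g' μ : ℝ → ℝ) (a b : ℝ) (hab : a ≤ b)
    (hg : ∀ t ∈ Icc a b, HasDerivAt g (g' t) t)
    (hg'c : ContinuousOn g' (Icc a b))
    (hμ : ∀ a b : ℝ, IntervalIntegrable μ volume a b)
    (hpos : ∀ t ∈ Icc a b, 0 < g t)
    (hle : ∀ t ∈ Icc a b, g' t ≤ μ t * g t) :
    g b ≤ g a * Real.exp (∫ s in a..b, μ s) := by
  have hgc : ContinuousOn g (Icc a b) := fun t ht => (hg t ht).continuousAt.continuousWithinAt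
  have hquot : ContinuousOn (fun t => g' t / g t) (Icc a b) :=
    hg'c.div hgc (fun t ht => (hpos t ht).ne')
  have hquot_int : IntervalIntegrable (fun t => g' t / g t) volume a b := by
    rw [intervalIntegrable_iff_integrableOn_Icc_of_le hab]
    exact hquot.integrableOn_compact isCompact_Icc
  have hFTC : (∫ t in a..b, g' t / g t) = Real.log (g b) - Real.log (g a) := by
    apply integral_eq_sub_of_hasDerivAt
    · intro t ht
      rw [uIcc_of_le hab] at ht
      exact (hg t ht).log (hpos t ht).ne'
    · exact hquot_int
  have hmono : (∫ t in a..b, g' t / g t) ≤ ∫ t in a..b, μ t := by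
    apply integral_mono_on hab hquot_int (hμ a b)
    intro t ht
    rw [div_le_iff₀ (hpos t ht)]
    exact hle t ht
  rw [hFTC] at hmono
  have hlog : Real.log (g b) ≤ Real.log (g a) + ∫ s in a..b, μ s := by linarith
  calc g b = Real.exp (Real.log (g b)) := (Real.exp_log (hpos b ⟨hab, le_rfl⟩)).symm
    _ ≤ Real.exp (Real.log (g a) + ∫ s in a..b, μ s) := Real.exp_le_exp.2 hlog
    _ = g a * Real.exp (∫ s in a..b, μ s) := by
        rw [Real.exp_add, Real.exp_log (hpos a ⟨le_rfl, hab⟩)]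

lemma gron_nonneg (g g' μ : ℝ → ℝ) (a b : ℝ) (hab : a ≤ b)
    (hg : ∀ t ∈ Icc a b, HasDerivAt g (g' t) t)
    (hg'c : ContinuousOn g' (Icc a b))
    (hμ : ∀ a b : ℝ, IntervalIntegrable μ volume a b)
    (hnn : ∀ t ∈ Icc a b, 0 ≤ g t)
    (hle : ∀ t ∈ Icc a b, g' t ≤ μ t * g t) :
    g b ≤ g a * Real.exp (∫ s in a..b, μ s) := by
  have hgc : ContinuousOn g (Icc a b) := fun t ht => (hg t ht).continuousAt.continuousWithinAt
  by_cases hgb : g b ≤ 0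
  · exact hgb.trans (mul_nonneg (hnn a ⟨le_rfl, hab⟩) (Real.exp_pos _).le)
  push_neg at hgb
  by_cases hS : (Icc a b ∩ g ⁻¹' {0}).Nonempty
  · exfalso
    set S := Icc a b ∩ g ⁻¹' {0} with hSdef
    have hSclosed : IsClosed S := hgc.preimage_isClosed_of_isClosed isClosed_Icc isClosed_singleton
    have hScomp : IsCompact S := isCompact_Icc.of_isClosed_subset hSclosed inter_subset_left
    obtain ⟨τ, ⟨hτmem, hτ0⟩, hτub⟩ := hScomp.exists_isGreatest hS
    have hgτ : g τ = (0 : ℝ) := hτ0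
    have hτb : τ < b := by
      rcases lt_or_eq_of_le hτmem.2 with h | h
      · exact h
      · exact absurd (h ▸ hgτ) (by linarith)
    have hposIoc : ∀ t ∈ Ioc τ b, 0 < g t := by
      intro t ht
      have htmem : t ∈ Icc a b := ⟨hτmem.1.trans ht.1.le, ht.2⟩
      rcases (hnn t htmem).lt_or_eq with h | h
      · exact h
      · exact absurd (hτub ⟨htmem, h.symm⟩) (not_le.2 ht.1)
    have key : ∀ s ∈ Ioc τ b, g b ≤ g s * Real.exp (∫ u in s..b, μ u) := by
      intro s hs
      have hsub : Icc s b ⊆ Icc a b := Icc_subset_Icc (hτmem.1.trans hs.1.le) le_rfl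
      refine gron_pos g g' μ s b hs.2 (fun t ht => hg t (hsub ht)) (hg'c.mono hsub) hμ ?_
        (fun t ht => hle t (hsub ht))
      intro t ht; exact hposIoc t ⟨hs.1.trans_le ht.1, ht.2⟩
    have hIoc_mem : Ioc τ b ∈ 𝓝[>] τ := Ioc_mem_nhdsGT_of_mem ⟨le_rfl, hτb⟩
    have hle_filter : 𝓝[>] τ ≤ 𝓝[Icc a b] τ :=
      nhdsWithin_le_of_mem (mem_of_superset hIoc_mem
        (fun t ht => ⟨hτmem.1.trans ht.1.le, ht.2⟩))
    have hgt : Tendsto g (𝓝[>] τ) (𝓝 0) := by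
      have h1 : Tendsto g (𝓝[Icc a b] τ) (𝓝 (g τ)) := hgc τ hτmem
      rw [hgτ] at h1
      exact h1.mono_left hle_filter
    have hP : Continuous fun s => ∫ u in b..s, μ u := intervalIntegral.continuous_primitive hμ b
    have hcont : Continuous fun s => Real.exp (∫ u in s..b, μ u) := by
      have h2 : Continuous fun s => Real.exp (-(∫ u in b..s, μ u)) :=
        Real.continuous_exp.comp hP.neg
      convert h2 using 2 with s
      rw [intervalIntegral.integral_symm]
    have hF : Tendsto (fun s => g s * Real.exp (∫ u in s..b, μ u)) (𝓝[>] τ)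
        (𝓝 (0 * Real.exp (∫ u in τ..b, μ u))) :=
      hgt.mul ((hcont.tendsto τ).mono_left nhdsWithin_le_nhds)
    have hgb_le : g b ≤ 0 * Real.exp (∫ u in τ..b, μ u) := by
      refine ge_of_tendsto hF ?_
      filter_upwards [hIoc_mem] with s hs using key s hs
    rw [zero_mul] at hgb_le
    linarith
  · refine gron_pos g g' μ a b hab hg hg'c hμ ?_ hle
    intro t ht
    rcases (hnn t ht).lt_or_eq with h | h
    · exact h
    · exact absurd ⟨ht, h.symm⟩ (fun hc => hS ⟨t, hc⟩)


/-- Theorem 1, Item 4: with bounds `k₁|x|^m ≤ V(t,x) ≤ k₂|x|^m`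
(constants `k₁, k₂ > 0`, `m > 0`) and `V̇ ≤ μ(t) V`, if `μ` is uniformly
exponentially stable with constants `α > 0`, `β ≥ 0`, then every solution satisfies
`|x(t)| ≤ (k₂/k₁)^{1/m} e^{β/m} |x(t₀)| e^{-(α/m)(t-t₀)}`; in particular the system
is globally uniformly exponentially stable. -/
theorem stmt7 (tsharp : ℝ) (n : ℕ)
    (f : ℝ → EuclideanSpace ℝ (Fin n) → EuclideanSpace ℝ (Fin n))
    (hf_cont : Continuous fun p : ℝ × EuclideanSpace ℝ (Fin n) => f p.1 p.2)
    (hf_lip : ∀ t, LocallyLipschitz (f t))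
    (hf0 : ∀ t ∈ Set.Ici tsharp, f t (0 : EuclideanSpace ℝ (Fin n)) = 0)
    (V : ℝ → EuclideanSpace ℝ (Fin n) → ℝ)
    (hV_C1 : ContDiff ℝ 1 fun p : ℝ × EuclideanSpace ℝ (Fin n) => V p.1 p.2)
    (hV_nonneg : ∀ t ∈ Set.Ici tsharp, ∀ x : EuclideanSpace ℝ (Fin n), 0 ≤ V t x)
    (m k₁ k₂ : ℝ) (hm : 0 < m) (hk₁ : 0 < k₁) (hk₂ : 0 < k₂)
    (μ : ℝ → ℝ)
    (hμ_int : ∀ a b : ℝ, IntervalIntegrable μ MeasureTheory.volume a b)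
    (hsandwich : ∀ t ∈ Set.Ici tsharp, ∀ x : EuclideanSpace ℝ (Fin n),
        k₁ * ‖x‖ ^ m ≤ V t x ∧ V t x ≤ k₂ * ‖x‖ ^ m)
    (hderiv : ∀ t ∈ Set.Ici tsharp, ∀ x : EuclideanSpace ℝ (Fin n),
        (fderiv ℝ (fun p : ℝ × EuclideanSpace ℝ (Fin n) => V p.1 p.2) (t, x)) (1, f t x)
          ≤ μ t * V t x)
    (α β : ℝ) (hα : 0 < α) (hβ : 0 ≤ β)
    (hμ_ues : ∀ t₀ ∈ Set.Ici tsharp, ∀ t ≥ t₀,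
        (∫ s in t₀..t, μ s) ≤ -α * (t - t₀) + β) :
    ∀ t₀ ∈ Set.Ici tsharp, ∀ x : ℝ → EuclideanSpace ℝ (Fin n),
      (∀ t ≥ t₀, HasDerivAt x (f t (x t)) t) →
      ∀ t ≥ t₀, ‖x t‖ ≤ (k₂ / k₁) ^ (1 / m) * Real.exp (β / m) * ‖x t₀‖ *
        Real.exp (-(α / m) * (t - t₀)) := by
  intro t₀ ht₀ x hx t ht
  set Vp : ℝ × EuclideanSpace ℝ (Fin n) → ℝ := fun p => V p.1 p.2 with hVp
  set g : ℝ → ℝ := fun s => V s (x s) with hgdef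
  set g' : ℝ → ℝ := fun s => (fderiv ℝ Vp (s, x s)) (1, f s (x s)) with hg'def
  have hIci : ∀ s ∈ Icc t₀ t, s ∈ Set.Ici tsharp := fun s hs => le_trans ht₀ hs.1
  -- derivative of g
  have hgD : ∀ s ∈ Icc t₀ t, HasDerivAt g (g' s) s := by
    intro s hs
    have hφ : HasDerivAt (fun u => ((u, x u) : ℝ × EuclideanSpace ℝ (Fin n))) (1, f s (x s)) s :=
      (hasDerivAt_id s).prodMk (hx s hs.1)
    have hVd : HasFDerivAt Vp (fderiv ℝ Vp (s, x s)) (s, x s) :=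
      (hV_C1.differentiable one_ne_zero (s, x s)).hasFDerivAt
    exact hVd.comp_hasDerivAt s hφ
  -- continuity of x on [t₀, t]
  have hxc : ContinuousOn x (Icc t₀ t) := fun s hs => (hx s hs.1).continuousAt.continuousWithinAt
  have hφc : ContinuousOn (fun s => ((s, x s) : ℝ × EuclideanSpace ℝ (Fin n))) (Icc t₀ t) :=
    continuousOn_id.prodMk hxc
  have hg'c : ContinuousOn g' (Icc t₀ t) := by
    have h1 : ContinuousOn (fun s => fderiv ℝ Vp (s, x s)) (Icc t₀ t) :=
      (hV_C1.continuous_fderiv one_ne_zero).comp_continuousOn hφc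
    have h2 : ContinuousOn (fun s => ((1 : ℝ), f s (x s))) (Icc t₀ t) :=
      continuousOn_const.prodMk (hf_cont.comp_continuousOn hφc)
    exact h1.clm_apply h2
  have hnn : ∀ s ∈ Icc t₀ t, 0 ≤ g s := fun s hs => hV_nonneg s (hIci s hs) (x s)
  have hle : ∀ s ∈ Icc t₀ t, g' s ≤ μ s * g s := fun s hs => hderiv s (hIci s hs) (x s)
  have hgron := gron_nonneg g g' μ t₀ t ht hgD hg'c hμ_int hnn hle
  -- chain of bounds
  have hub : g t₀ ≤ k₂ * ‖x t₀‖ ^ m := (hsandwich t₀ ht₀ (x t₀)).2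
  have hlb : k₁ * ‖x t‖ ^ m ≤ g t := (hsandwich t (hIci t ⟨ht, le_rfl⟩) (x t)).1
  have hexp : Real.exp (∫ s in t₀..t, μ s) ≤ Real.exp (-α * (t - t₀) + β) :=
    Real.exp_le_exp.2 (hμ_ues t₀ ht₀ t ht)
  have hgt₀nn : 0 ≤ g t₀ := hnn t₀ ⟨le_rfl, ht⟩
  have hchain : k₁ * ‖x t‖ ^ m ≤ k₂ * ‖x t₀‖ ^ m * Real.exp (-α * (t - t₀) + β) :=
    hlb.trans (hgron.trans (mul_le_mul hub hexp (Real.exp_pos _).le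
      (by positivity)))
  -- divide by k₁ and take m-th root
  have hxm : ‖x t‖ ^ m ≤ (k₂ / k₁) * ‖x t₀‖ ^ m * Real.exp (-α * (t - t₀) + β) := by
    rw [div_mul_eq_mul_div, div_mul_eq_mul_div, le_div_iff₀ hk₁]
    nlinarith [hchain]
  have hxnn : (0:ℝ) ≤ ‖x t‖ := norm_nonneg _
  have hmain : ‖x t‖ ≤ ((k₂ / k₁) * ‖x t₀‖ ^ m * Real.exp (-α * (t - t₀) + β)) ^ (1/m) := by
    have := Real.rpow_le_rpow (by positivity) hxm (by positivity : (0:ℝ) ≤ 1/m)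
    rwa [← Real.rpow_mul hxnn, mul_one_div_cancel hm.ne',
      Real.rpow_one] at this
  have hsplit : ((k₂ / k₁) * ‖x t₀‖ ^ m * Real.exp (-α * (t - t₀) + β)) ^ (1/m)
      = (k₂ / k₁) ^ (1/m) * ‖x t₀‖ * Real.exp ((-α * (t - t₀) + β) * (1/m)) := by
    rw [Real.mul_rpow (by positivity) (Real.exp_pos _).le,
      Real.mul_rpow (by positivity) (by positivity),
      ← Real.rpow_mul (norm_nonneg _), mul_one_div_cancel hm.ne', Real.rpow_one,
      ← Real.exp_mul]
  refine hmain.trans (le_of_eq ?_)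
  rw [hsplit, show (-α * (t - t₀) + β) * (1/m) = β/m + (-(α/m)*(t-t₀)) by field_simp; ring,
    Real.exp_add]
  ring
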